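/- Let W : [0,δ₀] → R be C¹ with W'(φ) ≥ c₀ > 0 on [0,δ₀]. Suppose ψ, φ : [0,∞) → [0,δ₀] are C² with ψ(0) = φ(0), ψ − φ ∈ H¹(R₊), and ∂_{xx}(ψ − φ) = W(ψ) − W(φ) + R(x) with sup_x |R(x)| ≤ M. Then sup_{x≥0} |ψ(x) − φ(x)| ≤ M/c₀. -/

import Mathlib

open Set MeasureTheory

/-- If a continuous function on `[0,∞)` is bounded below by a positive constant on a ray,
it is not in `L²`. -/
lemma not_memL2_of_ray (u : ℝ → ℝ) (x₁ c : ℝ) (hx₁ : 0 ≤ x₁) (hcpos : 0 < c)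
    (hbig : ∀ x ∈ Ici x₁, c ≤ u x)
    (hL2 : MemLp u 2 (volume.restrict (Ici (0:ℝ)))) : False := by
  obtain ⟨C, hCpos, hCc⟩ : ∃ C : NNReal, C ≠ 0 ∧ (C : ℝ) ≤ c :=
    ⟨(⟨c, hcpos.le⟩ : NNReal), fun h => hcpos.ne' (congrArg Subtype.val h), le_rfl⟩
  have hfin := hL2.meas_ge_lt_top (by norm_num) (by norm_num) hCpos
  have hsub : Ici x₁ ⊆ {x : ℝ | C ≤ ‖u x‖₊} := by
    intro x hx
    have h1 : c ≤ u x := hbig x hx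
    have : (C : ℝ) ≤ ‖u x‖ := le_trans hCc (h1.trans (le_abs_self _))
    simpa [← NNReal.coe_le_coe] using this
  have hmono : (volume.restrict (Ici (0:ℝ))) (Ici x₁) ≤
      (volume.restrict (Ici (0:ℝ))) {x : ℝ | C ≤ ‖u x‖₊} := measure_mono hsub
  have hray : (volume.restrict (Ici (0:ℝ))) (Ici x₁) = ⊤ := by
    rw [Measure.restrict_apply measurableSet_Ici]
    have : Ici x₁ ∩ Ici (0:ℝ) = Ici x₁ :=
      inter_eq_left.mpr (fun x hx => le_trans hx₁ hx)
    rw [this, Real.volume_Ici]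
  rw [hray] at hmono
  exact absurd (lt_of_le_of_lt hmono hfin) (by simp)

/-- Core ODE comparison lemma: if `u(0)=0`, `u` is `C²` on `(0,∞)`, `u ∈ L²`, and `u'' > 0`
wherever `u > a ≥ 0`, then `u ≤ a` on `[0,∞)`. -/
lemma core_lemma (a : ℝ) (ha : 0 ≤ a) (u u' u'' : ℝ → ℝ)
    (hcont : ContinuousOn u (Ici 0)) (h0 : u 0 = 0)
    (hd1 : ∀ x ∈ Ioi (0:ℝ), HasDerivAt u (u' x) x)
    (hd2 : ∀ x ∈ Ioi (0:ℝ), HasDerivAt u' (u'' x) x)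
    (hL2 : MemLp u 2 (volume.restrict (Ici (0:ℝ))))
    (hconv : ∀ x ∈ Ioi (0:ℝ), a < u x → 0 < u'' x) :
    ∀ x ∈ Ici (0:ℝ), u x ≤ a := by
  by_contra hcon
  push_neg at hcon
  obtain ⟨x₀, hx₀mem, hx₀⟩ := hcon
  have hx₀pos : 0 < x₀ := by
    rcases lt_or_eq_of_le (mem_Ici.mp hx₀mem) with h | h
    · exact h
    · exfalso; rw [← h, h0] at hx₀; exact absurd hx₀ (not_lt.mpr ha)
  -- find x₁ > 0 with u x₁ > a and u' x₁ > 0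
  set m : ℝ := (a + u x₀) / 2 with hm
  have ham : a < m := by rw [hm]; linarith
  have hmx₀ : m < u x₀ := by rw [hm]; linarith
  set C : Set ℝ := {x | x ∈ Icc 0 x₀ ∧ u x ≤ m} with hC
  have hCne : C.Nonempty := ⟨0, ⟨le_rfl, hx₀pos.le⟩, by rw [h0]; linarith⟩
  have hCclosed : IsClosed C := by
    have : C = Icc 0 x₀ ∩ u ⁻¹' (Iic m) := by ext x; simp [hC, and_comm]
    rw [this]
    exact (hcont.mono (Icc_subset_Ici_self)).preimage_isClosed_of_isClosed
      isClosed_Icc isClosed_Iic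
  have hCcomp : IsCompact C := isCompact_Icc.of_isClosed_subset hCclosed
    (fun x hx => hx.1)
  set c := sSup C with hcdef
  have hcC : c ∈ C := hCcomp.sSup_mem hCne
  have hc0 : 0 ≤ c := hcC.1.1
  have hcx₀ : c < x₀ := lt_of_le_of_ne hcC.1.2 (by
    intro h; rw [h] at hcC; exact absurd hcC.2 (not_le.mpr hmx₀))
  have hgt : ∀ x ∈ Ioc c x₀, m < u x := by
    intro x hx
    by_contra hle
    push_neg at hle
    have : x ∈ C := ⟨⟨hc0.trans hx.1.le, hx.2⟩, hle⟩
    exact absurd (le_csSup hCcomp.bddAbove this) (not_le.mpr hx.1)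
  -- MVT
  obtain ⟨ξ, hξmem, hξslope⟩ := exists_hasDerivAt_eq_slope u u' hcx₀
    (hcont.mono (fun x hx => le_trans hc0 hx.1))
    (fun x hx => hd1 x (lt_of_le_of_lt hc0 hx.1))
  have hξpos : 0 < ξ := lt_of_le_of_lt hc0 hξmem.1
  have huξ : a < u ξ := lt_trans ham (hgt ξ ⟨hξmem.1, hξmem.2.le⟩)
  have hu'ξ : 0 < u' ξ := by
    rw [hξslope]
    apply div_pos _ (by linarith [hξmem.2, hcx₀])
    have := hcC.2
    linarith
  -- now show u ≥ u ξ on [ξ, ∞)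
  set x₁ := ξ with hx₁def
  have hmain : ∀ x ∈ Ici x₁, u x₁ ≤ u x := by
    by_contra hK
    push_neg at hK
    obtain ⟨z, hzmem, hz⟩ := hK
    set K : Set ℝ := {x | x₁ ≤ x ∧ u x < u x₁} with hKdef
    have hKne : K.Nonempty := ⟨z, hzmem, hz⟩
    have hKbdd : BddBelow K := ⟨x₁, fun x hx => hx.1⟩
    set b := sInf K with hbdef
    have hx₁b : x₁ ≤ b := le_csInf hKne (fun x hx => hx.1)
    have hbpos : 0 < b := lt_of_lt_of_le hξpos hx₁b
    have hlo : ∀ x ∈ Ico x₁ b, u x₁ ≤ u x := by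
      intro x hx
      by_contra hlt
      push_neg at hlt
      exact absurd (csInf_le hKbdd ⟨hx.1, hlt⟩) (not_le.mpr hx.2)
    -- u b ≤ u x₁ by continuity (b is the inf of K)
    have hub_le : u b ≤ u x₁ := by
      by_contra hgt'
      push_neg at hgt'
      have hcontb : ContinuousAt u b := (hd1 b hbpos).continuousAt
      have hev : ∀ᶠ x in nhds b, u x₁ < u x :=
        hcontb.eventually_const_lt hgt'
      obtain ⟨ε, hεpos, hball⟩ := Metric.eventually_nhds_iff.mp hev
      obtain ⟨x, hxK, hxlt⟩ := exists_lt_of_csInf_lt hKne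
        (show sInf K < b + ε by rw [← hbdef]; linarith)
      have hxb : b ≤ x := csInf_le hKbdd hxK
      have : dist x b < ε := by
        rw [Real.dist_eq, abs_of_nonneg (by linarith)]; linarith
      exact absurd (hball this) (not_lt.mpr hxK.2.le)
    have hub_ge : u x₁ ≤ u b := by
      rcases eq_or_lt_of_le hx₁b with h | h
      · rw [← h]
      · have hcontb : ContinuousAt u b := (hd1 b hbpos).continuousAt
        have htend : Filter.Tendsto u (nhdsWithin b (Iio b)) (nhds (u b)) :=
          hcontb.continuousWithinAt.tendsto
        have hev : ∀ᶠ x in nhdsWithin b (Iio b), u x₁ ≤ u x := by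
          filter_upwards [Ico_mem_nhdsLT_of_mem ⟨h, le_rfl⟩] with x hx
          exact hlo x hx
        exact ge_of_tendsto htend hev
    have hub : u b = u x₁ := le_antisymm hub_le hub_ge
    -- u' b > 0
    have hu'b : 0 < u' b := by
      rcases eq_or_lt_of_le hx₁b with h | h
      · rw [← h]; exact hu'ξ
      · -- u' strictly increasing on [x₁, b]
        have hge_cc : ∀ x ∈ Icc x₁ b, u x₁ ≤ u x := by
          intro x hx
          rcases eq_or_lt_of_le hx.2 with h' | h'
          · rw [h', hub]
          · exact hlo x ⟨hx.1, h'⟩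
        have hmono : StrictMonoOn u' (Icc x₁ b) := by
          apply strictMonoOn_of_deriv_pos (convex_Icc x₁ b)
          · intro x hx
            exact ((hd2 x (lt_of_lt_of_le hξpos hx.1)).continuousAt).continuousWithinAt
          · intro x hx
            rw [interior_Icc] at hx
            have hxpos : 0 < x := lt_trans hξpos hx.1
            rw [(hd2 x hxpos).deriv]
            apply hconv x hxpos
            exact lt_of_lt_of_le huξ (hge_cc x ⟨hx.1.le, hx.2.le⟩)
        have := hmono (left_mem_Icc.mpr hx₁b) (right_mem_Icc.mpr hx₁b) h
        linarith
    -- positive derivative at b gives contradiction with b = sInf K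
    have hslope := (hasDerivAt_iff_tendsto_slope.mp (hd1 b hbpos))
    have hev : ∀ᶠ x in nhdsWithin b {b}ᶜ, 0 < slope u b x :=
      hslope.eventually (eventually_gt_nhds hu'b)
    have hev2 : ∀ᶠ x in nhdsWithin b (Ioi b), 0 < slope u b x :=
      hev.filter_mono (nhdsWithin_mono b (fun x hx => ne_of_gt hx))
    obtain ⟨ε, hεmem, hball⟩ := mem_nhdsGT_iff_exists_Ioc_subset.mp hev2
    obtain ⟨x, hxK, hxlt⟩ := exists_lt_of_csInf_lt hKne
      (show sInf K < ε by rw [← hbdef]; exact hεmem)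
    have hxb : b ≤ x := csInf_le hKbdd hxK
    have hxneb : b < x := by
      rcases eq_or_lt_of_le hxb with h | h
      · exfalso
        have h2 := hxK.2
        rw [← h, hub] at h2
        exact absurd h2 (lt_irrefl _)
      · exact h
    have hslopepos : 0 < slope u b x := hball ⟨hxneb, hxlt.le⟩
    rw [slope_def_field] at hslopepos
    have hnum : 0 < u x - u b := by
      rcases div_pos_iff.mp hslopepos with ⟨h1, _⟩ | ⟨_, h2⟩
      · exact h1
      · exfalso; linarith [sub_pos.mpr hxneb]
    rw [hub] at hnum
    linarith [hxK.2]
  -- now u ≥ u x₁ > a ≥ 0 on [x₁, ∞): contradicts L²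
  exact not_memL2_of_ray u x₁ (u x₁) hξpos.le (lt_of_le_of_lt ha huξ)
    hmain hL2

/-- Mean value estimate: since `W' ≥ c₀` on `[0,δ₀]`, `W` grows at least linearly. -/
lemma W_slope (δ₀ c₀ : ℝ) (W : ℝ → ℝ) (hW : ContDiffOn ℝ 1 W (Icc 0 δ₀))
    (hW' : ∀ φ ∈ Icc (0:ℝ) δ₀, c₀ ≤ derivWithin W (Icc 0 δ₀) φ) :
    ∀ s ∈ Icc (0:ℝ) δ₀, ∀ t ∈ Icc (0:ℝ) δ₀, s ≤ t → c₀ * (t - s) ≤ W t - W s := by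
  intro s hs t ht hst
  set g : ℝ → ℝ := fun x => W x - c₀ * x with hg
  have hdiffAt : ∀ x ∈ interior (Icc (0:ℝ) δ₀), DifferentiableAt ℝ W x := by
    intro x hx
    rw [interior_Icc] at hx
    exact ((hW.differentiableOn one_ne_zero) x (Ioo_subset_Icc_self hx)).differentiableAt
      (Icc_mem_nhds hx.1 hx.2)
  have hmono : MonotoneOn g (Icc 0 δ₀) := by
    apply monotoneOn_of_deriv_nonneg (convex_Icc _ _)
    · exact hW.continuousOn.sub ((continuous_const.mul continuous_id).continuousOn)
    · intro x hx
      exact ((hdiffAt x hx).sub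
        ((differentiableAt_id.const_mul c₀))).differentiableWithinAt
    · intro x hx
      have hxI := hx
      rw [interior_Icc] at hxI
      have h1 : HasDerivAt W (deriv W x) x := (hdiffAt x hx).hasDerivAt
      have h2 : HasDerivAt (fun y => c₀ * y) c₀ x := by
        simpa using (hasDerivAt_id x).const_mul c₀
      have h3 : deriv g x = deriv W x - c₀ := (h1.sub h2).deriv
      have h4 : deriv W x = derivWithin W (Icc 0 δ₀) x :=
        (derivWithin_of_mem_nhds (Icc_mem_nhds hxI.1 hxI.2)).symm
      rw [h3, h4, sub_nonneg]
      exact hW' x (Ioo_subset_Icc_self hxI)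
  have := hmono hs ht hst
  simp only [hg] at this
  linarith

theorem comparison_estimate (δ₀ c₀ M : ℝ) (hδ : 0 < δ₀) (hc : 0 < c₀) (hM : 0 ≤ M)
    (W : ℝ → ℝ) (hW : ContDiffOn ℝ 1 W (Icc 0 δ₀))
    (hW' : ∀ φ ∈ Icc (0:ℝ) δ₀, c₀ ≤ derivWithin W (Icc 0 δ₀) φ)
    (ψ φ ψ' φ' ψ'' φ'' R : ℝ → ℝ)
    (hrangeψ : ∀ x ∈ Ici (0:ℝ), ψ x ∈ Icc 0 δ₀)
    (hrangeφ : ∀ x ∈ Ici (0:ℝ), φ x ∈ Icc 0 δ₀)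
    (hdψ1 : ∀ x ∈ Ioi (0:ℝ), HasDerivAt ψ (ψ' x) x)
    (hdφ1 : ∀ x ∈ Ioi (0:ℝ), HasDerivAt φ (φ' x) x)
    (hdψ2 : ∀ x ∈ Ioi (0:ℝ), HasDerivAt ψ' (ψ'' x) x)
    (hdφ2 : ∀ x ∈ Ioi (0:ℝ), HasDerivAt φ' (φ'' x) x)
    (hcontψ : ContinuousOn ψ (Ici 0)) (hcontφ : ContinuousOn φ (Ici 0))
    (hinit : ψ 0 = φ 0)
    (hH1a : MemLp (fun x => ψ x - φ x) 2 (volume.restrict (Ici 0)))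
    (hH1b : MemLp (fun x => ψ' x - φ' x) 2 (volume.restrict (Ici 0)))
    (heq : ∀ x ∈ Ioi (0:ℝ), ψ'' x - φ'' x = W (ψ x) - W (φ x) + R x)
    (hR : ∀ x ∈ Ioi (0:ℝ), |R x| ≤ M) :
    ∀ x ∈ Ici (0:ℝ), |ψ x - φ x| ≤ M / c₀ := by
  have hMc : 0 ≤ M / c₀ := div_nonneg hM hc.le
  have hslope := W_slope δ₀ c₀ W hW hW'
  have h1 : ∀ x ∈ Ici (0:ℝ), ψ x - φ x ≤ M / c₀ := by
    apply core_lemma (M / c₀) hMc (fun x => ψ x - φ x) (fun x => ψ' x - φ' x)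
      (fun x => ψ'' x - φ'' x) (hcontψ.sub hcontφ) (by simp [hinit])
      (fun x hx => (hdψ1 x hx).sub (hdφ1 x hx))
      (fun x hx => (hdψ2 x hx).sub (hdφ2 x hx)) hH1a
    intro y hy hlt
    beta_reduce at hlt ⊢
    have hymem : y ∈ Ici (0:ℝ) := mem_Ici.mpr (le_of_lt (mem_Ioi.mp hy))
    have hle : φ y ≤ ψ y := by linarith
    have key := hslope (φ y) (hrangeφ y hymem) (ψ y) (hrangeψ y hymem) hle
    have hRy := (abs_le.mp (hR y hy)).1
    have hmul : M < (ψ y - φ y) * c₀ := (div_lt_iff₀ hc).mp hlt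
    have hcomm : c₀ * (ψ y - φ y) = (ψ y - φ y) * c₀ := mul_comm _ _
    have heqy := heq y hy
    linarith
  have h2 : ∀ x ∈ Ici (0:ℝ), φ x - ψ x ≤ M / c₀ := by
    have hH1a' : MemLp (fun x => φ x - ψ x) 2 (volume.restrict (Ici 0)) := by
      have : (fun x => φ x - ψ x) = fun x => -(ψ x - φ x) := by funext x; ring
      rw [this]; exact hH1a.neg
    apply core_lemma (M / c₀) hMc (fun x => φ x - ψ x) (fun x => φ' x - ψ' x)
      (fun x => φ'' x - ψ'' x) (hcontφ.sub hcontψ) (by simp [hinit])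
      (fun x hx => (hdφ1 x hx).sub (hdψ1 x hx))
      (fun x hx => (hdφ2 x hx).sub (hdψ2 x hx)) hH1a'
    intro y hy hlt
    beta_reduce at hlt ⊢
    have hymem : y ∈ Ici (0:ℝ) := mem_Ici.mpr (le_of_lt (mem_Ioi.mp hy))
    have hle : ψ y ≤ φ y := by linarith
    have key := hslope (ψ y) (hrangeψ y hymem) (φ y) (hrangeφ y hymem) hle
    have hRy := (abs_le.mp (hR y hy)).2
    have hmul : M < (φ y - ψ y) * c₀ := (div_lt_iff₀ hc).mp hlt
    have hcomm : c₀ * (φ y - ψ y) = (φ y - ψ y) * c₀ := mul_comm _ _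
    have heqy := heq y hy
    linarith
  intro x hx
  exact abs_le.mpr ⟨by linarith [h2 x hx], h1 x hx⟩
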